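/- arXiv:1312.6163 — 2 statements merged into one kernel-verified Lean document; each statement's English description precedes it below -/
import Mathlib

section
/- Let w be a weight on ℝ^n that is doubling: there is a constant C_d < ∞ such that w(2Q) ≤ C_d·w(Q) for every cube Q. Then w is uniformly of full dimension; that is, there exists η ∈ (0,1), depending only on n and C_d, such that for every cube Q and every linear subspace H ⊆ ℝ^n of dimension n−1, ∫_Q ∫_Q dist(x', H + x)/|x − x'| w(dx) w(dx') ≥ η·w(Q)². -/
open MeasureTheory Metric Set
open scoped ENNReal NNReal
open scoped RealInnerProductSpace

noncomputable section

/-- Euclidean space ℝ^n. -/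
abbrev Euc (n : ℕ) := EuclideanSpace ℝ (Fin n)

/-- An axis-parallel closed cube in ℝ^n, given by its center and (positive) side length. -/
structure Cube (n : ℕ) where
  center : Euc n
  side : ℝ
  side_pos : 0 < side

namespace Cube

variable {n : ℕ}

/-- The set of points of the cube. -/
def toSet (Q : Cube n) : Set (Euc n) :=
  {x | ∀ i, |x i - Q.center i| ≤ Q.side / 2}

/-- The concentric dilate `aQ`, as a set. -/
def scaled (Q : Cube n) (a : ℝ) : Set (Euc n) :=
  {x | ∀ i, |x i - Q.center i| ≤ a * Q.side / 2}

end Cube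

variable {n : ℕ}

/-- Truncated `d`-dimensional Riesz transform of `f σ`. -/
def rieszTrunc (d : ℝ) (σ : Measure (Euc n)) (f : Euc n → ℝ) (a b : ℝ) (x : Euc n) : Euc n :=
  ∫ y in {y : Euc n | a < dist x y ∧ dist x y < b},
    (f y * ‖x - y‖ ^ (-(d + 1))) • (x - y) ∂σ

/-- The two-weight norm inequality with constant `N`. -/
def NormIneq (d : ℝ) (σ w : Measure (Euc n)) (N : ℝ) : Prop :=
  ∀ f : Euc n → ℝ, MemLp f 2 σ → ∀ a b : ℝ, 0 < a → a < b →
    eLpNorm (rieszTrunc d σ f a b) 2 w ≤ ENNReal.ofReal N * eLpNorm f 2 σ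

/-- The testing conditions with constant `T`. -/
def Testing (d : ℝ) (σ w : Measure (Euc n)) (T : ℝ) : Prop :=
  ∀ Q : Cube n, ∀ a b : ℝ, 0 < a → a < b →
    (∫⁻ x in Q.toSet,
        ENNReal.ofReal (‖rieszTrunc d σ (Q.toSet.indicator fun _ => (1 : ℝ)) a b x‖ ^ 2) ∂w
      ≤ ENNReal.ofReal (T ^ 2) * σ Q.toSet) ∧
    (∫⁻ x in Q.toSet,
        ENNReal.ofReal (‖rieszTrunc d w (Q.toSet.indicator fun _ => (1 : ℝ)) a b x‖ ^ 2) ∂σ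
      ≤ ENNReal.ofReal (T ^ 2) * w Q.toSet)

/-- The reproducing Poisson integral `P^r(μ, Q)`. -/
def Pr (d : ℝ) (μ : Measure (Euc n)) (Q : Cube n) : ℝ≥0∞ :=
  ∫⁻ x, ENNReal.ofReal (Q.side ^ d / (Q.side ^ (2 * d) + infDist x Q.toSet ^ (2 * d))) ∂μ

/-- The `A2` condition with constant `A2`. -/
def A2cond (d : ℝ) (σ w : Measure (Euc n)) (A2 : ℝ) : Prop :=
  ∀ Q : Cube n,
    (w Q.toSet / ENNReal.ofReal (Q.side ^ d)) * Pr d σ Q ≤ ENNReal.ofReal A2 ∧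
    (σ Q.toSet / ENNReal.ofReal (Q.side ^ d)) * Pr d w Q ≤ ENNReal.ofReal A2

/-- `w` is uniformly of full dimension with constant `η`. -/
def UFD (w : Measure (Euc n)) (η : ℝ) : Prop :=
  ∀ Q : Cube n, ∀ H : Submodule ℝ (Euc n), Module.finrank ℝ H = n - 1 →
    ENNReal.ofReal η * (w Q.toSet) ^ 2 ≤
      ∫⁻ x in Q.toSet, ∫⁻ x' in Q.toSet,
        ENNReal.ofReal (infDist (x' - x) (H : Set (Euc n)) / dist x x') ∂w ∂w

/-- `σ` and `w` share no common point mass. -/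
def NoCommonAtom (σ w : Measure (Euc n)) : Prop :=
  ∀ x : Euc n, σ {x} = 0 ∨ w {x} = 0

lemma my_cube_measurable (Q : Cube n) : MeasurableSet Q.toSet := by
  have : Q.toSet = ⋂ i, {x : Euc n | |x i - Q.center i| ≤ Q.side / 2} := by
    ext x; simp [Cube.toSet]
  rw [this]
  refine MeasurableSet.iInter fun i => ?_
  have hc : Continuous fun x : Euc n => |x i - Q.center i| :=
    (((EuclideanSpace.proj (𝕜 := ℝ) i).continuous).sub continuous_const).abs
  exact (isClosed_le hc continuous_const).measurableSet

lemma my_doubling_iter (w : Measure (Euc n)) (C : ℝ)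
    (hd : ∀ Q : Cube n, w (Q.scaled 2) ≤ ENNReal.ofReal C * w Q.toSet)
    (Q : Cube n) : ∀ m : ℕ, w (Q.scaled (2 ^ m)) ≤ ENNReal.ofReal C ^ m * w Q.toSet := by
  intro m
  induction m with
  | zero =>
    have h1 : Q.scaled (2 ^ 0) = Q.toSet := by
      ext x; simp [Cube.scaled, Cube.toSet]
    rw [h1]; simp
  | succ m ih =>
    have hsp : 0 < 2 ^ m * Q.side := mul_pos (by positivity) Q.side_pos
    set P : Cube n := ⟨Q.center, 2 ^ m * Q.side, hsp⟩ with hP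
    have h1 : Q.scaled (2 ^ (m + 1)) = P.scaled 2 := by
      ext x
      simp only [Cube.scaled, Set.mem_setOf_eq, hP]
      have hb : (2:ℝ) ^ (m+1) * Q.side / 2 = 2 * (2 ^ m * Q.side) / 2 := by ring
      constructor <;> intro h i <;> have := h i <;> linarith
    have h2 : P.toSet = Q.scaled (2 ^ m) := rfl
    calc w (Q.scaled (2 ^ (m + 1))) = w (P.scaled 2) := by rw [h1]
      _ ≤ ENNReal.ofReal C * w P.toSet := hd P
      _ = ENNReal.ofReal C * w (Q.scaled (2 ^ m)) := by rw [h2]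
      _ ≤ ENNReal.ofReal C * (ENNReal.ofReal C ^ m * w Q.toSet) := by
          exact mul_le_mul_right ih _
      _ = ENNReal.ofReal C ^ (m + 1) * w Q.toSet := by ring

lemma my_doubling_sub (w : Measure (Euc n)) (C : ℝ)
    (hd : ∀ Q : Cube n, w (Q.scaled 2) ≤ ENNReal.ofReal C * w Q.toSet)
    (Q Q' : Cube n) (j : ℕ)
    (hc : ∀ i, |Q'.center i - Q.center i| ≤ Q.side / 2)
    (hs : Q'.side = Q.side / 2 ^ j) :
    w Q.toSet ≤ ENNReal.ofReal C ^ (j + 1) * w Q'.toSet := by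
  have hsub : Q.toSet ⊆ Q'.scaled (2 ^ (j + 1)) := by
    intro x hx i
    have h1 := hx i
    have h2 := hc i
    have hb : (2:ℝ) ^ (j+1) * Q'.side / 2 = Q.side := by
      rw [hs]
      have : (2:ℝ) ^ j ≠ 0 := by positivity
      field_simp
      ring
    rw [hb]
    have h3 : |x i - Q'.center i| ≤ |x i - Q.center i| + |Q.center i - Q'.center i| :=
      abs_sub_le _ _ _
    rw [abs_sub_comm (Q.center i)] at h3
    have := Q.side_pos
    linarith
  exact (measure_mono hsub).trans (my_doubling_iter w C hd Q' (j + 1))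


set_option maxHeartbeats 2000000 in
/-- A doubling weight on `ℝ^n` is uniformly of full dimension, with a
constant `η ∈ (0,1)` depending only on `n` and the doubling constant. -/
theorem statement4 (n : ℕ) (hn : 1 ≤ n) (Cd : ℝ) :
    ∃ η : ℝ, η ∈ Set.Ioo (0 : ℝ) 1 ∧
      ∀ w : Measure (Euc n), IsLocallyFiniteMeasure w →
        (∀ Q : Cube n, w (Q.scaled 2) ≤ ENNReal.ofReal Cd * w Q.toSet) →
        UFD w η := by
  set C : ℝ := max Cd 1 with hCdef
  have hC1 : (1:ℝ) ≤ C := le_max_right _ _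
  have hC0 : (0:ℝ) < C := lt_of_lt_of_le one_pos hC1
  have hnR : (1:ℝ) ≤ (n:ℝ) := by exact_mod_cast hn
  have hn0 : (0:ℝ) < (n:ℝ) := lt_of_lt_of_le one_pos hnR
  have hCpow1 : (1:ℝ) ≤ C ^ (2 * (n + 3)) := one_le_pow₀ hC1
  refine ⟨1 / (2 * n * C ^ (2 * (n + 3))), ⟨by positivity, ?_⟩, ?_⟩
  · rw [div_lt_one (by positivity)]
    nlinarith
  intro w _ hdbl0 Q H hH
  have hdbl : ∀ P : Cube n, w (P.scaled 2) ≤ ENNReal.ofReal C * w P.toSet := by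
    intro P
    exact (hdbl0 P).trans (mul_le_mul_left (ENNReal.ofReal_le_ofReal (le_max_left _ _)) _)
  -- unit normal vector
  have hHperp : Module.finrank ℝ Hᗮ = 1 := by
    have h1 := Submodule.finrank_add_finrank_orthogonal H
    rw [finrank_euclideanSpace_fin, hH] at h1
    omega
  obtain ⟨ν₀, hν₀H, hν₀⟩ : ∃ v ∈ Hᗮ, v ≠ 0 := by
    refine Submodule.exists_mem_ne_zero_of_ne_bot fun h => ?_
    rw [h] at hHperp; simp at hHperp
  set ν : Euc n := (‖ν₀‖:ℝ)⁻¹ • ν₀ with hνdef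
  have hν1 : ‖ν‖ = 1 := norm_smul_inv_norm hν₀
  have hνH : ν ∈ Hᗮ := Submodule.smul_mem _ _ hν₀H
  have hHne : (H : Set (Euc n)).Nonempty := ⟨0, H.zero_mem⟩
  have hinner_le : ∀ v : Euc n, |⟪v, ν⟫| ≤ infDist v (H : Set (Euc n)) := by
    intro v
    by_contra hlt
    push_neg at hlt
    obtain ⟨h, hhH, hdh⟩ := (infDist_lt_iff hHne).mp hlt
    have hz : ⟪h, ν⟫ = 0 := (Submodule.mem_orthogonal H ν).mp hνH h hhH
    have : |⟪v, ν⟫| = |⟪v - h, ν⟫| := by rw [inner_sub_left, hz, sub_zero]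
    have h2 : |⟪v - h, ν⟫| ≤ ‖v - h‖ * ‖ν‖ := abs_real_inner_le_norm _ _
    rw [hν1, mul_one] at h2
    rw [dist_eq_norm] at hdh
    linarith [this ▸ h2]
  -- coordinate facts
  have hsum : ∑ i, ν i ^ 2 = 1 := by
    have := EuclideanSpace.norm_eq ν
    rw [hν1] at this
    have h2 : Real.sqrt (∑ i, ‖ν i‖ ^ 2) = 1 := this.symm
    have h3 : (∑ i, ‖ν i‖ ^ 2) = 1 := by
      nlinarith [Real.sq_sqrt (show (0:ℝ) ≤ ∑ i, ‖ν i‖ ^ 2 from Finset.sum_nonneg fun i _ => sq_nonneg _)]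
    simpa [Real.norm_eq_abs, sq_abs] using h3
  have habs : ∀ i, |ν i| ≤ 1 := by
    intro i
    have h1 : ν i ^ 2 ≤ 1 := by
      rw [← hsum]
      exact Finset.single_le_sum (fun j _ => sq_nonneg (ν j)) (Finset.mem_univ i)
    nlinarith [abs_nonneg (ν i), sq_abs (ν i)]
  have hS1 : 1 ≤ ∑ i, |ν i| := by
    have h1 : ∑ i, ν i ^ 2 ≤ ∑ i, |ν i| := by
      refine Finset.sum_le_sum fun i _ => ?_
      have := habs i
      nlinarith [abs_nonneg (ν i), sq_abs (ν i)]
    linarith [hsum ▸ h1]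
  -- signs and subcubes
  set e : Fin n → ℝ := fun i => if 0 ≤ ν i then 1 else -1 with hedef
  have he : ∀ i, ν i * e i = |ν i| := by
    intro i
    by_cases h : 0 ≤ ν i
    · simp [hedef, h, abs_of_nonneg h]
    · push_neg at h
      simp [hedef, not_le.mpr h, abs_of_neg h]
  have heabs : ∀ i, |e i| = 1 := by
    intro i; by_cases h : 0 ≤ ν i <;> simp [hedef, h]
  have hℓ : 0 < Q.side := Q.side_pos
  set ℓ : ℝ := Q.side with hldef
  set s : ℝ := ℓ / 2 ^ (n + 2) with hsdef
  have hs0 : 0 < s := by positivity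
  have hsℓ : s ≤ ℓ := by
    rw [hsdef, div_le_iff₀ (by positivity)]
    nlinarith [one_le_pow₀ (show (1:ℝ) ≤ 2 by norm_num) (n := n + 2)]
  have hn2 : ((n:ℝ) + 1) ≤ 2 ^ (n + 1) := by
    have h := Nat.lt_two_pow_self (n := n)
    have h' : (n:ℝ) < 2 ^ n := by exact_mod_cast h
    have h1 : (1:ℝ) ≤ 2 ^ n := one_le_pow₀ (by norm_num)
    have h2 : (2:ℝ) ^ (n+1) = 2 ^ n + 2 ^ n := by ring
    linarith
  have hns : (n:ℝ) * s + s ≤ ℓ / 2 := by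
    have hp : (0:ℝ) < 2 ^ (n + 2) := by positivity
    have key : ((n:ℝ) + 1) * ℓ * 2 ≤ ℓ * 2 ^ (n + 2) := by
      have h2 : (2:ℝ) ^ (n + 2) = 2 ^ (n+1) * 2 := by ring
      nlinarith [mul_le_mul_of_nonneg_right hn2 hℓ.le]
    have heq : (n:ℝ) * s + s = ((n:ℝ)+1) * ℓ / 2 ^ (n+2) := by rw [hsdef]; ring
    rw [heq, div_le_div_iff₀ hp (by norm_num : (0:ℝ) < 2)]
    linarith [key]
  set c₁ : Euc n := WithLp.toLp 2 (fun i => Q.center i - e i * ((ℓ - s) / 2) : Fin n → ℝ) with hc₁def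
  set c₂ : Euc n := WithLp.toLp 2 (fun i => Q.center i + e i * ((ℓ - s) / 2) : Fin n → ℝ) with hc₂def
  set Q₁ : Cube n := ⟨c₁, s, hs0⟩ with hQ₁def
  set Q₂ : Cube n := ⟨c₂, s, hs0⟩ with hQ₂def
  have hcc1' : ∀ i, |c₁ i - Q.center i| = (ℓ - s) / 2 := by
    intro i
    have h0 : c₁ i - Q.center i = -(e i * ((ℓ - s)/2)) := by
      show (Q.center i - e i * ((ℓ - s) / 2)) - Q.center i = _
      ring
    rw [h0, abs_neg, abs_mul, heabs i, one_mul,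
      abs_of_nonneg (by linarith : (0:ℝ) ≤ (ℓ - s)/2)]
  have hcc2' : ∀ i, |c₂ i - Q.center i| = (ℓ - s) / 2 := by
    intro i
    have h0 : c₂ i - Q.center i = e i * ((ℓ - s)/2) := by
      show (Q.center i + e i * ((ℓ - s) / 2)) - Q.center i = _
      ring
    rw [h0, abs_mul, heabs i, one_mul,
      abs_of_nonneg (by linarith : (0:ℝ) ≤ (ℓ - s)/2)]
  have hcc1 : ∀ i, |c₁ i - Q.center i| ≤ ℓ / 2 := fun i => by rw [hcc1' i]; linarith
  have hcc2 : ∀ i, |c₂ i - Q.center i| ≤ ℓ / 2 := fun i => by rw [hcc2' i]; linarith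
  have hsub1 : Q₁.toSet ⊆ Q.toSet := by
    intro x hx i
    have h1 : |x i - c₁ i| ≤ s / 2 := hx i
    have h2 := (hcc1' i).le
    calc |x i - Q.center i| ≤ |x i - c₁ i| + |c₁ i - Q.center i| := abs_sub_le _ _ _
      _ ≤ s / 2 + (ℓ - s) / 2 := by linarith
      _ ≤ Q.side / 2 := by rw [← hldef]; linarith
  have hsub2 : Q₂.toSet ⊆ Q.toSet := by
    intro x hx i
    have h1 : |x i - c₂ i| ≤ s / 2 := hx i
    have h2 := (hcc2' i).le
    calc |x i - Q.center i| ≤ |x i - c₂ i| + |c₂ i - Q.center i| := abs_sub_le _ _ _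
      _ ≤ s / 2 + (ℓ - s) / 2 := by linarith
      _ ≤ Q.side / 2 := by rw [← hldef]; linarith
  have hd1 : w Q.toSet ≤ ENNReal.ofReal C ^ (n + 3) * w Q₁.toSet :=
    my_doubling_sub w C hdbl Q Q₁ (n + 2) hcc1 rfl
  have hd2 : w Q.toSet ≤ ENNReal.ofReal C ^ (n + 3) * w Q₂.toSet :=
    my_doubling_sub w C hdbl Q Q₂ (n + 2) hcc2 rfl
  -- gap
  have hgap : ∀ x ∈ Q₁.toSet, ∀ x' ∈ Q₂.toSet, ℓ / 2 ≤ ⟪x' - x, ν⟫ := by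
    intro x hx x' hx'
    have hinnerform : ⟪x' - x, ν⟫ = ∑ i, (x' i - x i) * ν i := by
      rw [PiLp.inner_apply]
      refine Finset.sum_congr rfl fun i _ => ?_
      rw [PiLp.sub_apply]
      simp only [RCLike.inner_apply, conj_trivial, mul_comm]
    rw [hinnerform]
    have key : ∀ i, |ν i| * (ℓ - s) - s ≤ (x' i - x i) * ν i := by
      intro i
      have h1 := abs_le.mp (hx i)
      have h2 := abs_le.mp (hx' i)
      have h3 := abs_le.mp (habs i)
      have hc2c1 : c₂ i - c₁ i = e i * (ℓ - s) := by
        show (Q.center i + e i * ((ℓ - s) / 2)) - (Q.center i - e i * ((ℓ - s) / 2)) = _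
        ring
      have hkey : ν i * (c₂ i - c₁ i) = |ν i| * (ℓ - s) := by
        rw [hc2c1, ← he i]; ring
      have hdecomp : (x' i - x i) * ν i
          = |ν i| * (ℓ - s) + ν i * ((x' i - c₂ i) - (x i - c₁ i)) := by
        linear_combination hkey
      rw [hdecomp]
      have hb1 : |ν i * ((x' i - c₂ i) - (x i - c₁ i))| ≤ 1 * s := by
        rw [abs_mul]
        have : |(x' i - c₂ i) - (x i - c₁ i)| ≤ s := by
          have := abs_sub (x' i - c₂ i) (x i - c₁ i)
          have ha := hx i
          have hb := hx' i
          calc |(x' i - c₂ i) - (x i - c₁ i)| ≤ |x' i - c₂ i| + |x i - c₁ i| := abs_sub _ _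
            _ ≤ s / 2 + s / 2 := by
                simp only [hQ₁def, hQ₂def] at ha hb
                exact add_le_add hb ha
            _ = s := by ring
        exact mul_le_mul (habs i) this (abs_nonneg _) (by norm_num)
      have := abs_le.mp hb1
      linarith
    calc ℓ / 2 ≤ (ℓ - s) - (n:ℝ) * s := by linarith
      _ ≤ (∑ i, |ν i|) * (ℓ - s) - (n:ℝ) * s := by nlinarith
      _ = ∑ i, (|ν i| * (ℓ - s) - s) := by
          rw [Finset.sum_sub_distrib, ← Finset.sum_mul, Finset.sum_const,
            Finset.card_univ, Fintype.card_fin, nsmul_eq_mul]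
      _ ≤ ∑ i, (x' i - x i) * ν i := Finset.sum_le_sum fun i _ => key i
  -- distance upper bound
  have hdistQ : ∀ x ∈ Q.toSet, ∀ x' ∈ Q.toSet, dist x x' ≤ (n:ℝ) * ℓ := by
    intro x hx x' hx'
    rw [EuclideanSpace.dist_eq]
    have hterm : ∀ i : Fin n, dist (x i) (x' i) ^ 2 ≤ ℓ ^ 2 := by
      intro i
      have h1 := hx i
      have h2 := hx' i
      have : dist (x i) (x' i) ≤ ℓ := by
        rw [Real.dist_eq]
        calc |x i - x' i| ≤ |x i - Q.center i| + |Q.center i - x' i| := abs_sub_le _ _ _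
          _ = |x i - Q.center i| + |x' i - Q.center i| := by rw [abs_sub_comm (Q.center i)]
          _ ≤ Q.side / 2 + Q.side / 2 := add_le_add h1 h2
          _ = ℓ := by rw [← hldef]; ring
      nlinarith [dist_nonneg (x := x i) (y := x' i)]
    have hsum2 : (∑ i, dist (x i) (x' i) ^ 2) ≤ (n:ℝ) * ℓ ^ 2 := by
      calc (∑ i, dist (x i) (x' i) ^ 2) ≤ ∑ _i : Fin n, ℓ ^ 2 :=
            Finset.sum_le_sum fun i _ => hterm i
        _ = (n:ℝ) * ℓ ^ 2 := by
            rw [Finset.sum_const, Finset.card_univ, Fintype.card_fin, nsmul_eq_mul]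
    have h3 : (∑ i, dist (x i) (x' i) ^ 2) ≤ ((n:ℝ) * ℓ) ^ 2 := by nlinarith
    calc Real.sqrt (∑ i, dist (x i) (x' i) ^ 2) ≤ Real.sqrt (((n:ℝ) * ℓ) ^ 2) :=
          Real.sqrt_le_sqrt h3
      _ = (n:ℝ) * ℓ := Real.sqrt_sq (by positivity)
  -- ratio lower bound
  have hrat : ∀ x ∈ Q₁.toSet, ∀ x' ∈ Q₂.toSet,
      1 / (2 * (n:ℝ)) ≤ infDist (x' - x) (H : Set (Euc n)) / dist x x' := by
    intro x hx x' hx'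
    have hg := hgap x hx x' hx'
    have hinf : ℓ / 2 ≤ infDist (x' - x) (H : Set (Euc n)) := by
      refine le_trans ?_ (hinner_le (x' - x))
      exact le_trans hg (le_abs_self _)
    have hdle : dist x x' ≤ (n:ℝ) * ℓ := hdistQ x (hsub1 hx) x' (hsub2 hx')
    have hd0 : 0 < dist x x' := by
      have h1 : infDist (x' - x) (H : Set (Euc n)) ≤ dist x x' := by
        have := infDist_le_dist_of_mem (x := x' - x) (y := (0 : Euc n)) H.zero_mem
        rw [dist_zero_right] at this
        calc infDist (x' - x) (H : Set (Euc n)) ≤ ‖x' - x‖ := this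
          _ = dist x' x := (dist_eq_norm _ _).symm
          _ = dist x x' := dist_comm _ _
      linarith
    have h2 : (ℓ / 2) / ((n:ℝ) * ℓ) ≤ infDist (x' - x) (H : Set (Euc n)) / dist x x' :=
      div_le_div₀ (le_trans (by positivity) hinf) hinf hd0 hdle
    calc 1 / (2 * (n:ℝ)) = (ℓ / 2) / ((n:ℝ) * ℓ) := by field_simp
      _ ≤ _ := h2
  -- measure-theoretic conclusion
  set g : Euc n → Euc n → ℝ≥0∞ := fun x x' =>
    ENNReal.ofReal (infDist (x' - x) (H : Set (Euc n)) / dist x x') with hgdef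
  have hm1 := my_cube_measurable Q₁
  have hm2 := my_cube_measurable Q₂
  have hinner_int : ∀ x ∈ Q₁.toSet,
      ENNReal.ofReal (1 / (2 * (n:ℝ))) * w Q₂.toSet ≤ ∫⁻ x' in Q₂.toSet, g x x' ∂w := by
    intro x hx
    rw [← setLIntegral_const Q₂.toSet (ENNReal.ofReal (1 / (2 * (n:ℝ))))]
    refine lintegral_mono_ae ?_
    filter_upwards [ae_restrict_mem hm2] with x' hx'
    exact ENNReal.ofReal_le_ofReal (hrat x hx x' hx')
  have houter : ENNReal.ofReal (1 / (2 * (n:ℝ))) * w Q₂.toSet * w Q₁.toSet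
      ≤ ∫⁻ x in Q₁.toSet, ∫⁻ x' in Q₂.toSet, g x x' ∂w ∂w := by
    rw [← setLIntegral_const Q₁.toSet (ENNReal.ofReal (1 / (2 * (n:ℝ))) * w Q₂.toSet)]
    refine lintegral_mono_ae ?_
    filter_upwards [ae_restrict_mem hm1] with x hx
    exact hinner_int x hx
  have hmono : (∫⁻ x in Q₁.toSet, ∫⁻ x' in Q₂.toSet, g x x' ∂w ∂w)
      ≤ ∫⁻ x in Q.toSet, ∫⁻ x' in Q.toSet, g x x' ∂w ∂w := by
    refine le_trans (lintegral_mono fun x => lintegral_mono_set hsub2) ?_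
    exact lintegral_mono_set hsub1
  -- final arithmetic
  have hofC : ENNReal.ofReal C ^ (n + 3) * ENNReal.ofReal C ^ (n + 3)
      = ENNReal.ofReal (C ^ (2 * (n + 3))) := by
    rw [ENNReal.ofReal_pow hC0.le, ← pow_add]
    congr 1
    ring
  have hsq : w Q.toSet ^ 2 ≤ ENNReal.ofReal (C ^ (2 * (n + 3))) * (w Q₂.toSet * w Q₁.toSet) := by
    calc w Q.toSet ^ 2 = w Q.toSet * w Q.toSet := sq (w Q.toSet)
      _ ≤ (ENNReal.ofReal C ^ (n + 3) * w Q₂.toSet) * (ENNReal.ofReal C ^ (n + 3) * w Q₁.toSet) :=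
          mul_le_mul' hd2 hd1
      _ = (ENNReal.ofReal C ^ (n + 3) * ENNReal.ofReal C ^ (n + 3)) * (w Q₂.toSet * w Q₁.toSet) := by
          ring
      _ = ENNReal.ofReal (C ^ (2 * (n + 3))) * (w Q₂.toSet * w Q₁.toSet) := by rw [hofC]
  have hηC : ENNReal.ofReal (1 / (2 * (n:ℝ) * C ^ (2 * (n + 3)))) *
      ENNReal.ofReal (C ^ (2 * (n + 3))) = ENNReal.ofReal (1 / (2 * (n:ℝ))) := by
    rw [← ENNReal.ofReal_mul (by positivity)]
    congr 1
    field_simp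
  calc ENNReal.ofReal (1 / (2 * (n:ℝ) * C ^ (2 * (n + 3)))) * w Q.toSet ^ 2
      ≤ ENNReal.ofReal (1 / (2 * (n:ℝ) * C ^ (2 * (n + 3)))) *
          (ENNReal.ofReal (C ^ (2 * (n + 3))) * (w Q₂.toSet * w Q₁.toSet)) :=
        mul_le_mul_right hsq _
    _ = ENNReal.ofReal (1 / (2 * (n:ℝ))) * w Q₂.toSet * w Q₁.toSet := by
        rw [← mul_assoc, hηC]; ring
    _ ≤ ∫⁻ x in Q₁.toSet, ∫⁻ x' in Q₂.toSet, g x x' ∂w ∂w := houter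
    _ ≤ _ := hmono
end
end

section
/- Let n ≥ 2 be an integer and let d be real with max{0, n−2} < d ≤ n. Identify ℝ^n = ℝ^{n−1} × ℝ and let S = Q₀ × {c}, where Q₀ ⊂ ℝ^{n−1} is an axis-parallel closed cube of side length ℓ_S > 0 and c ∈ ℝ. Then for every ε > 0 there exists a nonzero finite Borel measure σ on ℝ^n such that: (i) dist(S, supp σ) ≥ ε^{−1}·ℓ_S; and (ii) ε^{−1}·sup_{x ∈ S} |∫_{ℝ^n} (x−y)/|x−y|^{d+1} σ(dy)| ≤ ∫_{ℝ^n} ℓ_S/(ℓ_S^{d+1} + dist(y,S)^{d+1}) σ(dy), where the inner integral in (ii) is an absolutely convergent ℝ^n-valued integral (the supports being separated by (i)) and |·| is the Euclidean norm. -/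
open MeasureTheory Metric Set
open scoped ENNReal NNReal

noncomputable section

variable {n : ℕ}

/-- The topological support of a measure: points all of whose open neighborhoods have
positive measure. -/
def msupport (μ : Measure (Euc n)) : Set (Euc n) :=
  {x | ∀ U : Set (Euc n), IsOpen U → x ∈ U → 0 < μ U}

lemma aux_integrable_dirac {α E : Type*} [MeasurableSpace α] [MeasurableSingletonClass α]
    [NormedAddCommGroup E] (f : α → E) (a : α) :
    Integrable f (Measure.dirac a) := by
  refine ⟨(aestronglyMeasurable_const (b := f a)).congr (MeasureTheory.ae_eq_dirac f).symm, ?_⟩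
  simp only [HasFiniteIntegral, lintegral_dirac]
  exact ENNReal.coe_lt_top

lemma rpow_diff_le {q m a b : ℝ} (hq : 0 < q) (hm : 0 < m) (ha : m ≤ a) (hb : m ≤ b) :
    |a ^ (-q) - b ^ (-q)| ≤ q * m ^ (-q - 1) * |a - b| := by
  have key : ∀ x ∈ Set.Ici m, HasDerivWithinAt (fun t : ℝ => t ^ (-q))
      (-q * x ^ (-q - 1)) (Set.Ici m) x := by
    intro x hx
    have hx0 : x ≠ 0 := ne_of_gt (lt_of_lt_of_le hm hx)
    exact (Real.hasDerivAt_rpow_const (Or.inl hx0)).hasDerivWithinAt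
  have bound : ∀ x ∈ Set.Ici m, ‖-q * x ^ (-q - 1)‖ ≤ q * m ^ (-q - 1) := by
    intro x hx
    have hx0 : 0 < x := lt_of_lt_of_le hm hx
    rw [norm_mul, norm_neg, Real.norm_eq_abs, Real.norm_eq_abs, abs_of_pos hq,
      abs_of_pos (Real.rpow_pos_of_pos hx0 _)]
    exact mul_le_mul_of_nonneg_left
      (Real.rpow_le_rpow_of_nonpos hm hx (by linarith)) hq.le
  have := (convex_Ici m).norm_image_sub_le_of_norm_hasDerivWithin_le key bound hb ha
  simpa [Real.norm_eq_abs] using this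

lemma second_order_est {q m W A b : ℝ} (hq : 0 < q) (hm : 0 < m)
    (hW : m ≤ W) (hA : m ≤ A - |b|) {δ : ℝ} (hδ : |A - W| + |b| ≤ δ) :
    |(A + b) ^ (-q) - (A - b) ^ (-q) + 2 * q * b * W ^ (-(q+1))| ≤
      2 * q * (q + 1) * m ^ (-(q+1) - 1) * δ * |b| := by
  have hq1 : 0 < q + 1 := by linarith
  set g : ℝ → ℝ := fun t => (A + t) ^ (-q) - (A - t) ^ (-q) + (2 * q * W ^ (-(q+1))) * t
    with hgdef
  set g' : ℝ → ℝ := fun t =>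
      q * ((W ^ (-(q+1)) - (A + t) ^ (-(q+1))) + (W ^ (-(q+1)) - (A - t) ^ (-(q+1)))) with hg'def
  set s : Set ℝ := Set.Icc (-|b|) (|b|) with hsdef
  have habs : ∀ t ∈ s, m ≤ A + t ∧ m ≤ A - t := by
    intro t ht
    obtain ⟨h1, h2⟩ := ht
    constructor <;> [nlinarith [abs_nonneg b]; nlinarith [abs_nonneg b]]
  have hderiv : ∀ t ∈ s, HasDerivWithinAt g (g' t) s t := by
    intro t ht
    obtain ⟨hp, hm2⟩ := habs t ht
    have hp0 : A + t ≠ 0 := by nlinarith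
    have hm0 : A - t ≠ 0 := by nlinarith
    have h1 : HasDerivAt (fun t : ℝ => (A + t) ^ (-q)) (1 * -q * (A + t) ^ (-q - 1)) t :=
      ((hasDerivAt_id t).const_add A).rpow_const (Or.inl hp0)
    have h2 : HasDerivAt (fun t : ℝ => (A - t) ^ (-q)) (-1 * -q * (A - t) ^ (-q - 1)) t :=
      ((hasDerivAt_id t).const_sub A).rpow_const (Or.inl hm0)
    have h3 : HasDerivAt (fun t : ℝ => (2 * q * W ^ (-(q+1))) * t)
        (2 * q * W ^ (-(q+1)) * 1) t := (hasDerivAt_id t).const_mul _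
    have h := (h1.sub h2).add h3
    have hex : 1 * -q * (A + t) ^ (-q - 1) - -1 * -q * (A - t) ^ (-q - 1)
        + 2 * q * W ^ (-(q+1)) * 1 = g' t := by
      have e1 : (-q - 1 : ℝ) = -(q+1) := by ring
      rw [hg'def]
      simp only [e1]
      ring
    rw [hex] at h
    exact h.hasDerivWithinAt
  have hbound : ∀ t ∈ s, ‖g' t‖ ≤ 2 * q * (q + 1) * m ^ (-(q+1) - 1) * δ := by
    intro t ht
    obtain ⟨hp, hm2⟩ := habs t ht
    obtain ⟨ht1, ht2⟩ := ht
    have htb : |t| ≤ |b| := abs_le.mpr ⟨ht1, ht2⟩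
    have e1 : |W ^ (-(q+1)) - (A + t) ^ (-(q+1))| ≤ (q+1) * m ^ (-(q+1) - 1) * |W - (A + t)| :=
      rpow_diff_le hq1 hm hW hp
    have e2 : |W ^ (-(q+1)) - (A - t) ^ (-(q+1))| ≤ (q+1) * m ^ (-(q+1) - 1) * |W - (A - t)| :=
      rpow_diff_le hq1 hm hW hm2
    have h3 : |W - (A + t)| ≤ δ := by
      have heq : A + t - W = (A - W) + t := by ring
      rw [abs_sub_comm, heq]
      exact le_trans (abs_add_le _ _) (by linarith)
    have h4 : |W - (A - t)| ≤ δ := by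
      have heq : A - t - W = (A - W) + (-t) := by ring
      rw [abs_sub_comm, heq]
      refine le_trans (abs_add_le _ _) ?_
      rw [abs_neg]
      linarith
    have hc : (0:ℝ) ≤ (q+1) * m ^ (-(q+1) - 1) := by positivity
    rw [Real.norm_eq_abs, hg'def]
    calc |q * ((W ^ (-(q+1)) - (A + t) ^ (-(q+1))) + (W ^ (-(q+1)) - (A - t) ^ (-(q+1))))|
        = q * |(W ^ (-(q+1)) - (A + t) ^ (-(q+1))) + (W ^ (-(q+1)) - (A - t) ^ (-(q+1)))| := by
          rw [abs_mul, abs_of_pos hq]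
      _ ≤ q * (|W ^ (-(q+1)) - (A + t) ^ (-(q+1))| + |W ^ (-(q+1)) - (A - t) ^ (-(q+1))|) :=
          mul_le_mul_of_nonneg_left (abs_add_le _ _) hq.le
      _ ≤ q * ((q+1) * m ^ (-(q+1) - 1) * δ + (q+1) * m ^ (-(q+1) - 1) * δ) := by
          refine mul_le_mul_of_nonneg_left (add_le_add ?_ ?_) hq.le
          · exact e1.trans (mul_le_mul_of_nonneg_left h3 hc)
          · exact e2.trans (mul_le_mul_of_nonneg_left h4 hc)
      _ = 2 * q * (q + 1) * m ^ (-(q+1) - 1) * δ := by ring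
  have hmem0 : (0:ℝ) ∈ s := by
    constructor <;> simp [abs_nonneg]
  have hmemb : b ∈ s := by
    constructor
    · exact neg_abs_le b
    · exact le_abs_self b
  have := (convex_Icc _ _).norm_image_sub_le_of_norm_hasDerivWithin_le hderiv hbound hmem0 hmemb
  have hg0 : g 0 = 0 := by simp [hgdef]
  rw [hg0, sub_zero, sub_zero, Real.norm_eq_abs, Real.norm_eq_abs] at this
  calc |(A + b) ^ (-q) - (A - b) ^ (-q) + 2 * q * b * W ^ (-(q+1))|
      = |g b| := by rw [hgdef]; ring_nf
    _ ≤ 2 * q * (q + 1) * m ^ (-(q+1) - 1) * δ * |b| := this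

lemma integral_sum_pair_dirac {E : Type*} [NormedAddCommGroup E] [NormedSpace ℝ E]
    [CompleteSpace E] {n : ℕ}
    (w : Fin n → ℝ) (hw : ∀ j, 0 ≤ w j) (p p' : Fin n → Euc n) (f : Euc n → E) :
    ∫ y, f y ∂(∑ j : Fin n, ENNReal.ofReal (w j) • (Measure.dirac (p j) + Measure.dirac (p' j)))
      = ∑ j : Fin n, w j • (f (p j) + f (p' j)) := by
  rw [integral_finset_sum_measure]
  · refine Finset.sum_congr rfl fun j _ => ?_
    rw [integral_smul_measure,
      integral_add_measure (aux_integrable_dirac f _) (aux_integrable_dirac f _),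
      integral_dirac, integral_dirac, ENNReal.toReal_ofReal (hw j)]
  · intro j _
    exact (((aux_integrable_dirac f _).add_measure (aux_integrable_dirac f _)).smul_measure
      ENNReal.ofReal_ne_top)

lemma half_sq_rpow {R : ℝ} (hR : 0 < R) (s : ℝ) : (R^2/2) ^ s = 2 ^ (-s) * R ^ (2*s) := by
  rw [Real.div_rpow (by positivity) (by norm_num), Real.rpow_neg (by norm_num)]
  rw [← Real.rpow_natCast R 2, ← Real.rpow_mul hR.le]
  rw [div_eq_inv_mul]
  norm_num [mul_comm]

lemma norm_add_smul_single {n : ℕ} (v : Euc n) (t : ℝ) (j : Fin n) :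
    ‖v + t • EuclideanSpace.single j (1:ℝ)‖^2 = ‖v‖^2 + t^2 + 2*t*(v j) := by
  rw [norm_add_sq_real]
  have h1 : (inner ℝ v (t • EuclideanSpace.single j (1:ℝ)) : ℝ) = t * v j := by
    rw [real_inner_smul_right, EuclideanSpace.inner_single_right]
    simp
  have h2 : ‖t • EuclideanSpace.single j (1:ℝ)‖ = |t| := by
    rw [norm_smul, EuclideanSpace.norm_single]
    simp [Real.norm_eq_abs]
  rw [h1, h2, sq_abs]
  ring


lemma euc_sum_apply {n : ℕ} {ι : Type*} (s : Finset ι) (f : ι → Euc n) (i : Fin n) :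
    (∑ j ∈ s, f j) i = ∑ j ∈ s, f j i := by
  classical
  refine Finset.induction_on s (by simp) ?_
  intro a t ha ih
  rw [Finset.sum_insert ha, Finset.sum_insert ha, PiLp.add_apply, ih]

set_option maxHeartbeats 2000000 in
/-- For `max{0, n-2} < d ≤ n` and a codimension-one cube
`S = Q₀ × {c} ⊂ ℝ^{n-1} × ℝ = ℝ^n`, for every `ε > 0` there is a nonzero finite measure `σ`
supported at distance at least `ε⁻¹ ℓ(S)` from `S` whose Riesz transform is uniformly small
on `S` compared to the gradient Poisson average of `σ` on `S`. -/
theorem statement7 (n : ℕ) (hn : 2 ≤ n) (d : ℝ)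
    (hd1 : max 0 ((n : ℝ) - 2) < d) (hd2 : d ≤ (n : ℝ))
    (w₀ : Fin (n - 1) → ℝ) (ℓS : ℝ) (hℓS : 0 < ℓS) (c : ℝ) (ε : ℝ) (hε : 0 < ε) :
    ∃ σ : Measure (Euc n), IsFiniteMeasure σ ∧ σ ≠ 0 ∧
      (∀ x ∈ {x : Euc n |
          (∀ i : Fin (n - 1), |x (Fin.castLE (Nat.sub_le n 1) i) - w₀ i| ≤ ℓS / 2) ∧
          x ⟨n - 1, by omega⟩ = c},
        ∀ y ∈ msupport σ, ε⁻¹ * ℓS ≤ dist x y) ∧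
      (∀ x ∈ {x : Euc n |
          (∀ i : Fin (n - 1), |x (Fin.castLE (Nat.sub_le n 1) i) - w₀ i| ≤ ℓS / 2) ∧
          x ⟨n - 1, by omega⟩ = c},
        ε⁻¹ * ‖∫ y, (‖x - y‖ ^ (-(d + 1))) • (x - y) ∂σ‖ ≤
          ∫ y, ℓS / (ℓS ^ (d + 1) +
            infDist y {x : Euc n |
              (∀ i : Fin (n - 1), |x (Fin.castLE (Nat.sub_le n 1) i) - w₀ i| ≤ ℓS / 2) ∧
              x ⟨n - 1, by omega⟩ = c} ^ (d + 1)) ∂σ) := by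
  have hn' : (2:ℝ) ≤ (n:ℝ) := by exact_mod_cast hn
  have hd0 : 0 < d := lt_of_le_of_lt (le_max_left _ _) hd1
  have hdn : (n : ℝ) - 2 < d := lt_of_le_of_lt (le_max_right _ _) hd1
  have hwlast0 : 0 < d + 2 - n := by linarith
  set q : ℝ := (d+1)/2 with hqdef
  have hq : 0 < q := by rw [hqdef]; linarith
  have hsq1 : (1:ℝ) ≤ Real.sqrt n := by
    rw [show (1:ℝ) = Real.sqrt 1 from Real.sqrt_one.symm]
    exact Real.sqrt_le_sqrt (by linarith)
  have hsqn : Real.sqrt n ^ 2 = n := Real.sq_sqrt (by linarith)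
  set ρ : ℝ := Real.sqrt n * ℓS with hρdef
  have hρpos : 0 < ρ := mul_pos (lt_of_lt_of_le one_pos hsq1) hℓS
  have hℓρ : ℓS ≤ ρ := le_mul_of_one_le_left hℓS.le hsq1
  set Ctot : ℝ := 4*(d+1)*q*2^(q+1) + 4*n*q*(q+1)*2^(q+2) with hCdef
  have hC : 0 < Ctot := by
    have h1 : (0:ℝ) < 4*(d+1)*q*2^(q+1) := by positivity
    have h2 : (0:ℝ) ≤ 4*n*q*(q+1)*2^(q+2) := by positivity
    linarith
  set R : ℝ := max (max (4*ρ) (2*ε⁻¹*ℓS)) (max ℓS (ε⁻¹ * Ctot * ρ^2 / ((d+1)*ℓS))) with hRdef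
  have hR4ρ : 4*ρ ≤ R := le_trans (le_max_left _ _) (le_max_left _ _)
  have hRεℓ : 2*ε⁻¹*ℓS ≤ R := le_trans (le_max_right _ _) (le_max_left _ _)
  have hRℓ : ℓS ≤ R := le_trans (le_max_left _ _) (le_max_right _ _)
  have hRfin : ε⁻¹ * Ctot * ρ^2 / ((d+1)*ℓS) ≤ R := le_trans (le_max_right _ _) (le_max_right _ _)
  have hR : 0 < R := lt_of_lt_of_le (by positivity) hR4ρ
  have hρR : ρ ≤ R/4 := by linarith
  have hW0 : (0:ℝ) < R^2 := by positivity
  have hm0 : (0:ℝ) < R^2/2 := by positivity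
  -- geometry
  set lst : Fin n := ⟨n-1, by omega⟩ with hlstdef
  set z : Euc n := (WithLp.equiv 2 (Fin n → ℝ)).symm
      (fun j => if h : (j:ℕ) < n - 1 then w₀ ⟨j, h⟩ else c) with hzdef
  have hz : ∀ j : Fin n, z j = if h : (j:ℕ) < n - 1 then w₀ ⟨j, h⟩ else c := fun j => rfl
  set e : Fin n → Euc n := fun j => EuclideanSpace.single j (1:ℝ) with hedef
  set w : Fin n → ℝ := fun j => if j = lst then d + 2 - n else 1 with hwdef
  have hw : ∀ j, 0 ≤ w j := by
    intro j
    rw [hwdef]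
    dsimp only
    split
    · linarith
    · norm_num
  have hwsum : ∑ j : Fin n, w j = d + 1 := by
    have hsp : ∀ j : Fin n, w j = 1 + (if j = lst then d + 1 - (n:ℝ) else 0) := by
      intro j
      rw [hwdef]
      dsimp only
      split
      · ring
      · ring
    rw [Finset.sum_congr rfl fun j _ => hsp j, Finset.sum_add_distrib, Finset.sum_const,
      Finset.sum_ite_eq' Finset.univ lst (fun _ => d + 1 - (n:ℝ)),
      Finset.card_univ, Fintype.card_fin, if_pos (Finset.mem_univ lst), nsmul_eq_mul]
    ring
  set Pp : Fin n → Euc n := fun j => z + R • e j with hPpdef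
  set Pm : Fin n → Euc n := fun j => z - R • e j with hPmdef
  set σ : Measure (Euc n) :=
    ∑ j : Fin n, ENNReal.ofReal (w j) • (Measure.dirac (Pp j) + Measure.dirac (Pm j)) with hσdef
  have hσapp : ∀ s : Set (Euc n),
      σ s = ∑ j : Fin n, ENNReal.ofReal (w j) *
        (Measure.dirac (Pp j) s + Measure.dirac (Pm j) s) := by
    intro s
    rw [hσdef, Measure.finset_sum_apply]
    exact Finset.sum_congr rfl fun j _ => by
      rw [Measure.smul_apply, Measure.add_apply, smul_eq_mul]
  -- membership of z
  have hzmem1 : ∀ i : Fin (n - 1), |z (Fin.castLE (Nat.sub_le n 1) i) - w₀ i| ≤ ℓS / 2 := by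
    intro i
    rw [hz]
    rw [dif_pos (show ((Fin.castLE (Nat.sub_le n 1) i : Fin n) : ℕ) < n - 1 from i.isLt)]
    have heq : (⟨((Fin.castLE (Nat.sub_le n 1) i : Fin n) : ℕ), i.isLt⟩ : Fin (n-1)) = i :=
      Fin.ext rfl
    rw [heq, sub_self, abs_zero]
    positivity
  have hlstval : ¬ ((lst : ℕ) < n - 1) := by
    rw [hlstdef]
    exact lt_irrefl _
  have hzmem2 : z lst = c := by
    rw [hz, dif_neg hlstval]
  -- subtraction formulas
  have hsub_p : ∀ (x : Euc n) (j : Fin n), x - Pp j = (x - z) + (-R) • e j := by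
    intro x j
    rw [hPpdef]
    dsimp only
    rw [neg_smul]
    abel
  have hsub_m : ∀ (x : Euc n) (j : Fin n), x - Pm j = (x - z) + R • e j := by
    intro x j
    rw [hPmdef]
    dsimp only
    abel
  -- coordinate facts for x in the cube
  have hxfacts : ∀ x : Euc n,
      (∀ i : Fin (n - 1), |x (Fin.castLE (Nat.sub_le n 1) i) - w₀ i| ≤ ℓS / 2) →
      x lst = c →
      (∀ j : Fin n, |(x - z) j| ≤ ℓS / 2) ∧ ‖x - z‖ ≤ ρ ∧ (x - z) lst = 0 := by
    intro x hx1 hx2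
    have hulast : (x - z) lst = 0 := by
      rw [PiLp.sub_apply, hx2, hzmem2, sub_self]
    have hcoord : ∀ j : Fin n, |(x - z) j| ≤ ℓS / 2 := by
      intro j
      by_cases hj : (j:ℕ) < n - 1
      · rw [PiLp.sub_apply]
        have h1 := hx1 ⟨(j:ℕ), hj⟩
        have h2 : Fin.castLE (Nat.sub_le n 1) (⟨(j:ℕ), hj⟩ : Fin (n-1)) = j := Fin.ext rfl
        rw [h2] at h1
        rw [hz, dif_pos hj]
        exact h1
      · have hjl : j = lst := by
          rw [hlstdef]
          refine Fin.ext ?_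
          have := j.isLt
          simp only []
          omega
        rw [hjl, hulast, abs_zero]
        positivity
    refine ⟨hcoord, ?_, hulast⟩
    have h1 : ‖x - z‖^2 = ∑ j : Fin n, ((x - z) j)^2 := by
      rw [EuclideanSpace.norm_eq, Real.sq_sqrt (Finset.sum_nonneg fun j _ => by positivity)]
      exact Finset.sum_congr rfl fun j _ => by rw [Real.norm_eq_abs, sq_abs]
    have h2 : ∑ j : Fin n, ((x - z) j)^2 ≤ n * (ℓS/2)^2 := by
      calc ∑ j : Fin n, ((x - z) j)^2 ≤ ∑ _j : Fin n, (ℓS/2)^2 :=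
            Finset.sum_le_sum fun j _ => by
              have h := abs_le.mp (hcoord j)
              exact sq_le_sq' (by linarith) (by linarith)
        _ = n * (ℓS/2)^2 := by
            rw [Finset.sum_const, Finset.card_univ, Fintype.card_fin, nsmul_eq_mul]
    have h3 : ‖x - z‖^2 ≤ ρ^2 := by
      rw [h1]
      have : ρ^2 = n * ℓS^2 := by rw [hρdef, mul_pow, hsqn]
      rw [this]
      nlinarith [hℓS, hn']
    nlinarith [norm_nonneg (x - z), hρpos]
  -- dist from P's to z
  have hPdist : ∀ j : Fin n, dist (Pp j) z = R ∧ dist (Pm j) z = R := by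
    intro j
    have he1 : ‖R • e j‖ = R := by
      rw [hedef]
      dsimp only
      rw [norm_smul, EuclideanSpace.norm_single]
      simp [Real.norm_eq_abs, abs_of_pos hR]
    constructor
    · rw [dist_eq_norm]
      have : Pp j - z = R • e j := by rw [hPpdef]; dsimp only; abel
      rw [this, he1]
    · rw [dist_eq_norm]
      have : Pm j - z = -(R • e j) := by rw [hPmdef]; dsimp only; abel
      rw [this, norm_neg, he1]
  -- kernel exponent
  have hker : ∀ v : Euc n, ‖v‖ ^ (-(d+1)) = (‖v‖^2 : ℝ) ^ (-q) := by
    intro v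
    conv_rhs => rw [← Real.rpow_natCast ‖v‖ 2, ← Real.rpow_mul (norm_nonneg v)]
    congr 1
    rw [hqdef]
    push_cast
    ring
  refine ⟨σ, ?_, ?_, ?_, ?_⟩
  · -- finite measure
    refine ⟨?_⟩
    rw [hσapp Set.univ]
    refine ENNReal.sum_lt_top.mpr fun j _ => ?_
    have h1 : Measure.dirac (Pp j) Set.univ = 1 := by simp
    have h2 : Measure.dirac (Pm j) Set.univ = 1 := by simp
    rw [h1, h2]
    exact ENNReal.mul_lt_top ENNReal.ofReal_lt_top (by norm_num)
  · -- nonzero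
    intro h0
    have hpos : 0 < σ {Pp lst} := by
      rw [hσapp]
      refine lt_of_lt_of_le ?_
        (Finset.single_le_sum (f := fun j => ENNReal.ofReal (w j) *
          (Measure.dirac (Pp j) {Pp lst} + Measure.dirac (Pm j) {Pp lst}))
          (fun j _ => zero_le) (Finset.mem_univ lst))
    -- 0 < ofReal (w lst) * (dirac..)
      have h1 : Measure.dirac (Pp lst) {Pp lst} = 1 := by
        rw [Measure.dirac_apply]
        simp
      rw [h1]
      have hwl : w lst = d + 2 - n := by rw [hwdef]; simp
      rw [hwl]
      calc (0:ℝ≥0∞) < ENNReal.ofReal (d+2-n) := ENNReal.ofReal_pos.mpr hwlast0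
        _ = ENNReal.ofReal (d+2-n) * 1 := (mul_one _).symm
        _ ≤ ENNReal.ofReal (d+2-n) * (1 + Measure.dirac (Pm lst) {Pp lst}) :=
            mul_le_mul_right le_self_add _
    rw [h0] at hpos
    simp at hpos
  · -- distance
    intro x hx y hy
    obtain ⟨hcoord, hnormu, hulast⟩ := hxfacts x hx.1 hx.2
    have hyP : y ∈ Set.range Pp ∪ Set.range Pm := by
      by_contra hyn
      have hop : IsOpen ((Set.range Pp ∪ Set.range Pm)ᶜ) :=
        (((Set.finite_range Pp).union (Set.finite_range Pm)).isClosed).isOpen_compl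
      have h0 := hy _ hop hyn
      have hzero : σ ((Set.range Pp ∪ Set.range Pm)ᶜ) = 0 := by
        rw [hσapp]
        refine Finset.sum_eq_zero fun j _ => ?_
        have h1 : Measure.dirac (Pp j) ((Set.range Pp ∪ Set.range Pm)ᶜ) = 0 := by
          rw [Measure.dirac_apply, Set.indicator_of_notMem]
          exact Set.notMem_compl_iff.mpr (Or.inl ⟨j, rfl⟩)
        have h2 : Measure.dirac (Pm j) ((Set.range Pp ∪ Set.range Pm)ᶜ) = 0 := by
          rw [Measure.dirac_apply, Set.indicator_of_notMem]
          exact Set.notMem_compl_iff.mpr (Or.inr ⟨j, rfl⟩)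
        rw [h1, h2]
        simp
      rw [hzero] at h0
      exact lt_irrefl _ h0
    have hεℓR : ε⁻¹ * ℓS ≤ R/2 := by
      have := hRεℓ
      linarith
    have hεℓpos : 0 < ε⁻¹ * ℓS := by positivity
    have hkey : ∀ j : Fin n, ∀ t : ℝ, |t| = R →
        ε⁻¹ * ℓS ≤ ‖(x - z) + t • e j‖ := by
      intro j t ht
      have hsq : ‖(x - z) + t • e j‖^2 = ‖x - z‖^2 + t^2 + 2*t*((x - z) j) := by
        rw [hedef]
        exact norm_add_smul_single (x - z) t j
      have h1 : 2*t*((x - z) j) ≥ -(R * ℓS) := by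
        have h2 := abs_le.mp (hcoord j)
        have h3 : |2*t*((x - z) j)| ≤ 2*R*(ℓS/2) := by
          rw [abs_mul, abs_mul]
          simp only [abs_two, ht]
          exact mul_le_mul_of_nonneg_left (hcoord j) (by positivity)
        have := (abs_le.mp h3).1
        linarith
      have ht2 : t^2 = R^2 := by
        rw [← sq_abs, ht]
      have h4 : (R/2)^2 ≤ ‖(x - z) + t • e j‖^2 := by
        rw [hsq, ht2]
        nlinarith [norm_nonneg (x - z), sq_nonneg ‖x - z‖, hℓρ, hρR, hR, hρpos]
      nlinarith [norm_nonneg ((x - z) + t • e j), h4, hεℓR, hεℓpos, hR]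
    rcases hyP with ⟨j, rfl⟩ | ⟨j, rfl⟩
    · rw [dist_eq_norm, hsub_p x j]
      exact hkey j (-R) (by rw [abs_neg, abs_of_pos hR])
    · rw [dist_eq_norm, hsub_m x j]
      exact hkey j R (abs_of_pos hR)
  · -- main estimate
    intro x hx
    obtain ⟨hcoord, hnormu, hulast⟩ := hxfacts x hx.1 hx.2
    set u : Euc n := x - z with hudef
    set A : ℝ := ‖u‖^2 + R^2 with hAdef
    set b : Fin n → ℝ := fun j => 2*R*(u j) with hbdef
    have hnsqp : ∀ j : Fin n, (‖x - Pp j‖^2 : ℝ) = A - b j := by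
      intro j
      rw [hsub_p x j, hedef]
      dsimp only
      rw [norm_add_smul_single]
      rw [hAdef, hbdef]
      dsimp only
      ring
    have hnsqm : ∀ j : Fin n, (‖x - Pm j‖^2 : ℝ) = A + b j := by
      intro j
      rw [hsub_m x j, hedef]
      dsimp only
      rw [norm_add_smul_single]
      all_goals rw [hAdef, hbdef]
      all_goals dsimp only
      all_goals ring
    have hbabs : ∀ j : Fin n, |b j| ≤ R * ρ := by
      intro j
      rw [hbdef]
      dsimp only
      rw [abs_mul, abs_mul, abs_two, abs_of_pos hR]
      have h2 := hcoord j
      nlinarith [abs_nonneg (u j), hℓρ, hR]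
    have hAW : |A - R^2| ≤ R * ρ := by
      rw [hAdef]
      have h1 : ‖u‖^2 + R^2 - R^2 = ‖u‖^2 := by ring
      rw [h1, abs_of_nonneg (by positivity)]
      nlinarith [hnormu, norm_nonneg u, hρR, hρpos, hR]
    have hmAb : ∀ j : Fin n, R^2/2 ≤ A - |b j| := by
      intro j
      rw [hAdef]
      have h1 : R * ρ ≤ R * (R/4) := mul_le_mul_of_nonneg_left hρR hR.le
      nlinarith [hbabs j, norm_nonneg u, sq_nonneg ‖u‖]
    have hmW : R^2/2 ≤ R^2 := by linarith
    have hδj : ∀ j : Fin n, |A - R^2| + |b j| ≤ 2*(R*ρ) := fun j => by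
      linarith [hAW, hbabs j]
    have hmAm : ∀ j : Fin n, R^2/2 ≤ A - b j := fun j => by
      have h1 := hmAb j
      have h2 := le_abs_self (b j)
      linarith
    have hmAp : ∀ j : Fin n, R^2/2 ≤ A + b j := fun j => by
      have h1 := hmAb j
      have h2 := neg_abs_le (b j)
      linarith
    set Qm : Fin n → ℝ := fun j => (A - b j) ^ (-q) with hQmdef
    set Qp : Fin n → ℝ := fun j => (A + b j) ^ (-q) with hQpdef
    -- LHS integral value
    have hkerp : ∀ j : Fin n,
        (‖x - Pp j‖ ^ (-(d+1))) • (x - Pp j) = Qm j • (u + (-R) • e j) := by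
      intro j
      rw [hker, hnsqp j, hsub_p x j, hQmdef]
    have hkerm : ∀ j : Fin n,
        (‖x - Pm j‖ ^ (-(d+1))) • (x - Pm j) = Qp j • (u + R • e j) := by
      intro j
      rw [hker, hnsqm j, hsub_m x j, hQpdef]
    have hLHSval : ∫ y, (‖x - y‖ ^ (-(d + 1))) • (x - y) ∂σ
        = ∑ j : Fin n, w j • (Qm j • (u + (-R) • e j) + Qp j • (u + R • e j)) := by
      rw [hσdef, integral_sum_pair_dirac w hw Pp Pm (fun y => (‖x - y‖ ^ (-(d + 1))) • (x - y))]
      exact Finset.sum_congr rfl fun j _ => by rw [hkerp j, hkerm j]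
    set α : ℝ := ∑ j : Fin n, w j * (Qm j + Qp j) with hαdef
    set α₀ : ℝ := 2*(d+1)*((R^2 : ℝ)) ^ (-q) with hα₀def
    have hstep1 : ∑ j : Fin n, w j • (Qm j • (u + (-R) • e j) + Qp j • (u + R • e j))
        = α • u + ∑ j : Fin n, (w j * (R * (Qp j - Qm j))) • e j := by
      have hper : ∀ j : Fin n, w j • (Qm j • (u + (-R) • e j) + Qp j • (u + R • e j))
          = (w j * (Qm j + Qp j)) • u + (w j * (R * (Qp j - Qm j))) • e j := by
        intro j
        simp only [smul_add, smul_smul]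
        rw [show w j * (Qm j + Qp j) = w j * Qm j + w j * Qp j from mul_add _ _ _,
          show w j * (R * (Qp j - Qm j)) = w j * (Qp j * R) + w j * (Qm j * -R) by ring,
          add_smul, add_smul]
        abel
      rw [Finset.sum_congr rfl fun j _ => hper j, Finset.sum_add_distrib, ← Finset.sum_smul,
        hαdef]
    have hurep : u = ∑ j : Fin n, (u j) • e j := by
      ext i
      rw [euc_sum_apply]
      have hterm : ∀ j : Fin n, (u j • e j) i = if i = j then u j else 0 := by
        intro j
        rw [PiLp.smul_apply, hedef]
        dsimp only
        rw [EuclideanSpace.single_apply, smul_eq_mul, mul_ite, mul_one, mul_zero]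
      rw [Finset.sum_congr rfl fun j _ => hterm j,
        Finset.sum_ite_eq Finset.univ i (fun j => u j), if_pos (Finset.mem_univ i)]
    have hα₀u : α₀ • u = ∑ j : Fin n, (α₀ * u j) • e j := by
      conv_lhs => rw [hurep]
      rw [Finset.smul_sum]
      exact Finset.sum_congr rfl fun j _ => smul_smul _ _ _
    have hsplit2 : α • u + ∑ j : Fin n, (w j * (R * (Qp j - Qm j))) • e j
        = (α - α₀) • u + ∑ j : Fin n, (α₀ * u j + w j * (R * (Qp j - Qm j))) • e j := by
      have h1 : ∑ j : Fin n, (α₀ * u j + w j * (R * (Qp j - Qm j))) • e j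
          = α₀ • u + ∑ j : Fin n, (w j * (R * (Qp j - Qm j))) • e j := by
        rw [hα₀u, ← Finset.sum_add_distrib]
        exact Finset.sum_congr rfl fun j _ => add_smul _ _ _
      rw [h1, sub_smul]
      abel
    -- bound |α - α₀|
    have hαb : |α - α₀| ≤ (d+1) * (2 * (q * (R^2/2)^(-q-1) * (2*(R*ρ)))) := by
      have hα₀sum : α₀ = ∑ j : Fin n, w j * (2 * ((R^2:ℝ)) ^ (-q)) := by
        rw [← Finset.sum_mul, hwsum, hα₀def]
        ring
      rw [hα₀sum, hαdef, ← Finset.sum_sub_distrib]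
      refine le_trans (Finset.abs_sum_le_sum_abs _ _) ?_
      have hper : ∀ j ∈ Finset.univ, |w j * (Qm j + Qp j) - w j * (2*((R^2:ℝ))^(-q))|
          ≤ w j * (2 * (q * (R^2/2)^(-q-1) * (2*(R*ρ)))) := by
        intro j _
        rw [← mul_sub, abs_mul, abs_of_nonneg (hw j)]
        refine mul_le_mul_of_nonneg_left ?_ (hw j)
        have habm : |A - b j - R^2| ≤ 2*(R*ρ) := by
          have h5 : A - b j - R^2 = (A - R^2) + (-(b j)) := by ring
          rw [h5]
          refine le_trans (abs_add_le _ _) ?_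
          rw [abs_neg]
          exact hδj j
        have habp : |A + b j - R^2| ≤ 2*(R*ρ) := by
          have h5 : A + b j - R^2 = (A - R^2) + b j := by ring
          rw [h5]
          exact le_trans (abs_add_le _ _) (hδj j)
        have e1 : |Qm j - ((R^2:ℝ))^(-q)| ≤ q * (R^2/2)^(-q-1) * (2*(R*ρ)) := by
          refine le_trans (rpow_diff_le hq hm0 (hmAm j) hmW) ?_
          exact mul_le_mul_of_nonneg_left habm (by positivity)
        have e2 : |Qp j - ((R^2:ℝ))^(-q)| ≤ q * (R^2/2)^(-q-1) * (2*(R*ρ)) := by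
          refine le_trans (rpow_diff_le hq hm0 (hmAp j) hmW) ?_
          exact mul_le_mul_of_nonneg_left habp (by positivity)
        have h6 : Qm j + Qp j - 2*((R^2:ℝ))^(-q)
            = (Qm j - ((R^2:ℝ))^(-q)) + (Qp j - ((R^2:ℝ))^(-q)) := by ring
        rw [h6]
        refine le_trans (abs_add_le _ _) ?_
        linarith [e1, e2]
      refine le_trans (Finset.sum_le_sum hper) ?_
      rw [← Finset.sum_mul, hwsum]
    -- per-coordinate second-order bound
    have hcoef : ∀ j : Fin n, |α₀ * u j + w j * (R * (Qp j - Qm j))|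
        ≤ R * (2*q*(q+1)*(R^2/2)^(-(q+1)-1)*(2*(R*ρ))*(R*ρ)) := by
      intro j
      by_cases hj : j = lst
      · have hu0 : u j = 0 := by rw [hj]; exact hulast
        have hb0 : b j = 0 := by rw [hbdef]; dsimp only; rw [hu0, mul_zero]
        have hqq : Qp j = Qm j := by
          rw [hQpdef, hQmdef]
          dsimp only
          rw [hb0, add_zero, sub_zero]
        rw [hu0, hqq, mul_zero, sub_self, mul_zero, mul_zero, add_zero, abs_zero]
        positivity
      · have hwj : w j = 1 := by rw [hwdef]; dsimp only; rw [if_neg hj]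
        rw [hwj, one_mul]
        have hWid : ((R^2:ℝ)) * ((R^2:ℝ))^(-(q+1)) = ((R^2:ℝ))^(-q) := by
          calc ((R^2:ℝ)) * ((R^2:ℝ))^(-(q+1))
              = ((R^2:ℝ))^(1:ℝ) * ((R^2:ℝ))^(-(q+1)) := by rw [Real.rpow_one]
            _ = ((R^2:ℝ))^((1:ℝ) + -(q+1)) := (Real.rpow_add hW0 _ _).symm
            _ = ((R^2:ℝ))^(-q) := by congr 1; ring
        have hαu : α₀ * u j = R * (2*q*(b j)*((R^2:ℝ))^(-(q+1))) := by
          rw [hα₀def, hbdef]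
          dsimp only
          have h4q : 2*(d+1) = 4*q := by rw [hqdef]; ring
          rw [h4q, ← hWid]
          ring
        have hRfac : α₀ * u j + R * (Qp j - Qm j)
            = R * ((Qp j - Qm j) + 2*q*(b j)*((R^2:ℝ))^(-(q+1))) := by
          rw [hαu]; ring
        rw [hRfac, abs_mul, abs_of_pos hR]
        refine mul_le_mul_of_nonneg_left ?_ hR.le
        have hso := second_order_est (q := q) (m := R^2/2) (W := (R^2:ℝ)) (A := A)
          (b := b j) hq hm0 hmW (hmAb j) (hδj j)
        have heq2 : (Qp j - Qm j) + 2*q*(b j)*((R^2:ℝ))^(-(q+1))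
            = (A + b j) ^ (-q) - (A - b j) ^ (-q) + 2 * q * (b j) * ((R^2:ℝ)) ^ (-(q+1)) := by
          rw [hQpdef, hQmdef]
        rw [heq2]
        refine le_trans hso ?_
        exact mul_le_mul_of_nonneg_left (hbabs j) (by positivity)
    -- exponent bookkeeping
    have e2a : (2:ℝ) ^ (-(-q-1)) = 2 ^ (q+1) := by
      congr 1
      ring
    have e2b : (2:ℝ) ^ (-(-(q+1)-1)) = 2 ^ (q+2) := by
      congr 1
      ring
    have hE1 : R ^ (2*(-q-1)) * R = R ^ (-(d+2)) := by
      calc R ^ (2*(-q-1)) * R = R ^ (2*(-q-1)) * R ^ (1:ℝ) := by rw [Real.rpow_one]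
        _ = R ^ (2*(-q-1) + 1) := (Real.rpow_add hR _ _).symm
        _ = R ^ (-(d+2)) := by congr 1; rw [hqdef]; ring
    have hE2 : R ^ (2*(-(q+1)-1)) * R^3 = R ^ (-(d+2)) := by
      calc R ^ (2*(-(q+1)-1)) * R^3
          = R ^ (2*(-(q+1)-1)) * R ^ ((3:ℕ):ℝ) := by rw [Real.rpow_natCast]
        _ = R ^ (2*(-(q+1)-1) + ((3:ℕ):ℝ)) := (Real.rpow_add hR _ _).symm
        _ = R ^ (-(d+2)) := by congr 1; rw [hqdef]; push_cast; ring
    have hkey1 : ((R^2/2:ℝ)) ^ (-q-1) * R = 2^(q+1) * R^(-(d+2)) := by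
      rw [half_sq_rpow hR (-q-1), e2a, mul_assoc, hE1]
    have hkey2 : ((R^2/2:ℝ)) ^ (-(q+1)-1) * R^3 = 2^(q+2) * R^(-(d+2)) := by
      rw [half_sq_rpow hR (-(q+1)-1), e2b, mul_assoc, hE2]
    -- total norm bound
    have hFtot : ‖∫ y, (‖x - y‖ ^ (-(d + 1))) • (x - y) ∂σ‖ ≤ Ctot * ρ^2 * R^(-(d+2)) := by
      rw [hLHSval, hstep1, hsplit2]
      refine le_trans (norm_add_le _ _) ?_
      have hT1 : ‖(α - α₀) • u‖ ≤ 4*(d+1)*q*2^(q+1) * ρ^2 * R^(-(d+2)) := by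
        rw [norm_smul, Real.norm_eq_abs]
        have h1 : |α - α₀| * ‖u‖ ≤ |α - α₀| * ρ :=
          mul_le_mul_of_nonneg_left hnormu (abs_nonneg _)
        refine le_trans h1 ?_
        refine le_trans (mul_le_mul_of_nonneg_right hαb hρpos.le) ?_
        have h2 : (d+1) * (2 * (q * (R^2/2)^(-q-1) * (2*(R*ρ)))) * ρ
            = 4*(d+1)*q*((R^2/2)^(-q-1)*R)*ρ^2 := by ring
        rw [h2, hkey1]
        exact le_of_eq (by ring)
      have hT2 : ‖∑ j : Fin n, (α₀ * u j + w j * (R * (Qp j - Qm j))) • e j‖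
          ≤ 4*n*q*(q+1)*2^(q+2) * ρ^2 * R^(-(d+2)) := by
        refine le_trans (norm_sum_le _ _) ?_
        have h1 : ∀ j : Fin n, ‖(α₀ * u j + w j * (R * (Qp j - Qm j))) • e j‖
            = |α₀ * u j + w j * (R * (Qp j - Qm j))| := by
          intro j
          rw [norm_smul, Real.norm_eq_abs, hedef]
          dsimp only
          rw [EuclideanSpace.norm_single, norm_one, mul_one]
        rw [Finset.sum_congr rfl fun j _ => h1 j]
        refine le_trans (Finset.sum_le_card_nsmul _ _ _ fun j _ => hcoef j) ?_
        rw [Finset.card_univ, Fintype.card_fin, nsmul_eq_mul]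
        have h2 : (n:ℝ) * (R * (2*q*(q+1)*(R^2/2)^(-(q+1)-1)*(2*(R*ρ))*(R*ρ)))
            = 4*n*q*(q+1)*((R^2/2)^(-(q+1)-1)*R^3)*ρ^2 := by ring
        rw [h2, hkey2]
        exact le_of_eq (by ring)
      calc ‖(α - α₀) • u‖ + ‖∑ j : Fin n, (α₀ * u j + w j * (R * (Qp j - Qm j))) • e j‖
          ≤ 4*(d+1)*q*2^(q+1) * ρ^2 * R^(-(d+2)) + 4*n*q*(q+1)*2^(q+2) * ρ^2 * R^(-(d+2)) :=
            add_le_add hT1 hT2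
        _ = Ctot * ρ^2 * R^(-(d+2)) := by rw [hCdef]; ring
    -- middle inequality
    have hmid : ε⁻¹ * (Ctot * ρ^2 * R^(-(d+2))) ≤ (d+1) * ℓS * R^(-(d+1)) := by
      have hsplit : R^(-(d+2)) = R^(-(d+1)) * R⁻¹ := by
        rw [← Real.rpow_neg_one R, ← Real.rpow_add hR]
        congr 1
        ring
      have h1 : ε⁻¹ * Ctot * ρ^2 ≤ (d+1)*ℓS*R := by
        rw [div_le_iff₀ (by positivity : (0:ℝ) < (d+1)*ℓS)] at hRfin
        linarith [hRfin]
      calc ε⁻¹ * (Ctot * ρ^2 * R^(-(d+2)))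
          = (ε⁻¹ * Ctot * ρ^2) * (R^(-(d+1)) * R⁻¹) := by rw [hsplit]; ring
        _ ≤ ((d+1)*ℓS*R) * (R^(-(d+1)) * R⁻¹) := by
            refine mul_le_mul_of_nonneg_right h1 ?_
            positivity
        _ = (d+1)*ℓS*R^(-(d+1)) * (R * R⁻¹) := by ring
        _ = (d+1)*ℓS*R^(-(d+1)) := by rw [mul_inv_cancel₀ hR.ne', mul_one]
    -- RHS lower bound
    have hzS : z ∈ {x : Euc n |
        (∀ i : Fin (n - 1), |x (Fin.castLE (Nat.sub_le n 1) i) - w₀ i| ≤ ℓS / 2) ∧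
        x ⟨n - 1, by omega⟩ = c} := ⟨hzmem1, hzmem2⟩
    have hone : ∀ p : Euc n, dist p z = R →
        ℓS/(2*R^(d+1)) ≤ ℓS / (ℓS^(d+1) + infDist p {x : Euc n |
          (∀ i : Fin (n - 1), |x (Fin.castLE (Nat.sub_le n 1) i) - w₀ i| ≤ ℓS / 2) ∧
          x ⟨n - 1, by omega⟩ = c} ^ (d+1)) := by
      intro p hp
      have hinf : infDist p {x : Euc n |
          (∀ i : Fin (n - 1), |x (Fin.castLE (Nat.sub_le n 1) i) - w₀ i| ≤ ℓS / 2) ∧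
          x ⟨n - 1, by omega⟩ = c} ≤ R := by
        refine le_trans (infDist_le_dist_of_mem hzS) ?_
        rw [hp]
      have hinf0 : 0 ≤ infDist p {x : Euc n |
          (∀ i : Fin (n - 1), |x (Fin.castLE (Nat.sub_le n 1) i) - w₀ i| ≤ ℓS / 2) ∧
          x ⟨n - 1, by omega⟩ = c} := infDist_nonneg
      have hd1' : (0:ℝ) ≤ d + 1 := by linarith
      have hb1 : ℓS^(d+1) ≤ R^(d+1) := Real.rpow_le_rpow hℓS.le hRℓ hd1'
      have hb2 : infDist p {x : Euc n |
          (∀ i : Fin (n - 1), |x (Fin.castLE (Nat.sub_le n 1) i) - w₀ i| ≤ ℓS / 2) ∧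
          x ⟨n - 1, by omega⟩ = c} ^ (d+1) ≤ R^(d+1) := Real.rpow_le_rpow hinf0 hinf hd1'
      have hden : (0:ℝ) < ℓS^(d+1) + infDist p {x : Euc n |
          (∀ i : Fin (n - 1), |x (Fin.castLE (Nat.sub_le n 1) i) - w₀ i| ≤ ℓS / 2) ∧
          x ⟨n - 1, by omega⟩ = c} ^ (d+1) := by
        have hh1 := Real.rpow_pos_of_pos hℓS (d+1)
        have hh2 := Real.rpow_nonneg hinf0 (d+1)
        linarith
      exact div_le_div_of_nonneg_left hℓS.le hden (by linarith [hb1, hb2])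
    have hRHSval : ∫ y, ℓS / (ℓS ^ (d + 1) +
          infDist y {x : Euc n |
            (∀ i : Fin (n - 1), |x (Fin.castLE (Nat.sub_le n 1) i) - w₀ i| ≤ ℓS / 2) ∧
            x ⟨n - 1, by omega⟩ = c} ^ (d + 1)) ∂σ
        = ∑ j : Fin n, w j • (ℓS / (ℓS^(d+1) + infDist (Pp j) {x : Euc n |
            (∀ i : Fin (n - 1), |x (Fin.castLE (Nat.sub_le n 1) i) - w₀ i| ≤ ℓS / 2) ∧
            x ⟨n - 1, by omega⟩ = c} ^ (d+1))
          + ℓS / (ℓS^(d+1) + infDist (Pm j) {x : Euc n |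
            (∀ i : Fin (n - 1), |x (Fin.castLE (Nat.sub_le n 1) i) - w₀ i| ≤ ℓS / 2) ∧
            x ⟨n - 1, by omega⟩ = c} ^ (d+1))) := by
      rw [hσdef, integral_sum_pair_dirac w hw Pp Pm
        (fun y => ℓS / (ℓS ^ (d + 1) + infDist y {x : Euc n |
          (∀ i : Fin (n - 1), |x (Fin.castLE (Nat.sub_le n 1) i) - w₀ i| ≤ ℓS / 2) ∧
          x ⟨n - 1, by omega⟩ = c} ^ (d + 1)))]
    have hRHSlow : (d+1) * ℓS * R^(-(d+1)) ≤ ∑ j : Fin n, w j •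
        (ℓS / (ℓS^(d+1) + infDist (Pp j) {x : Euc n |
            (∀ i : Fin (n - 1), |x (Fin.castLE (Nat.sub_le n 1) i) - w₀ i| ≤ ℓS / 2) ∧
            x ⟨n - 1, by omega⟩ = c} ^ (d+1))
          + ℓS / (ℓS^(d+1) + infDist (Pm j) {x : Euc n |
            (∀ i : Fin (n - 1), |x (Fin.castLE (Nat.sub_le n 1) i) - w₀ i| ≤ ℓS / 2) ∧
            x ⟨n - 1, by omega⟩ = c} ^ (d+1))) := by
      have hper : ∀ j : Fin n, w j * (ℓS / R^(d+1)) ≤ w j •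
          (ℓS / (ℓS^(d+1) + infDist (Pp j) {x : Euc n |
              (∀ i : Fin (n - 1), |x (Fin.castLE (Nat.sub_le n 1) i) - w₀ i| ≤ ℓS / 2) ∧
              x ⟨n - 1, by omega⟩ = c} ^ (d+1))
            + ℓS / (ℓS^(d+1) + infDist (Pm j) {x : Euc n |
              (∀ i : Fin (n - 1), |x (Fin.castLE (Nat.sub_le n 1) i) - w₀ i| ≤ ℓS / 2) ∧
              x ⟨n - 1, by omega⟩ = c} ^ (d+1))) := by
        intro j
        rw [smul_eq_mul]
        refine mul_le_mul_of_nonneg_left ?_ (hw j)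
        have ha := hone (Pp j) (hPdist j).1
        have hb := hone (Pm j) (hPdist j).2
        have hsum2 : ℓS / R^(d+1) = ℓS/(2*R^(d+1)) + ℓS/(2*R^(d+1)) := by ring
        rw [hsum2]
        exact add_le_add ha hb
      calc (d+1) * ℓS * R^(-(d+1)) = ∑ j : Fin n, w j * (ℓS / R^(d+1)) := by
            rw [← Finset.sum_mul, hwsum, Real.rpow_neg hR.le]
            ring
        _ ≤ _ := Finset.sum_le_sum fun j _ => hper j
    calc ε⁻¹ * ‖∫ y, (‖x - y‖ ^ (-(d + 1))) • (x - y) ∂σ‖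
        ≤ ε⁻¹ * (Ctot * ρ^2 * R^(-(d+2))) :=
          mul_le_mul_of_nonneg_left hFtot (by positivity)
      _ ≤ (d+1) * ℓS * R^(-(d+1)) := hmid
      _ ≤ _ := hRHSlow
      _ = _ := hRHSval.symm
end
end
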